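/- (Parameterization of reversible Markov matrices.) Let G = (V, E) be a finite connected simple graph, D = (V, A) its directed version, and let 𝒮 be a family of proper nonempty subsets of V whose cocycle vectors u(B), B ∈ 𝒮, span (over ℝ) the cocycle space, i.e., the linear span of all cocycle vectors u(B), ∅ ≠ B ⊊ V. Let P be a Markov matrix on V with P(v,w) > 0 if and only if {v,w} ∈ E, for v ≠ w. Then P satisfies detailed balance with respect to some strictly positive function on V if and only if there exist a symmetric function s : V × V → ℝ_{>0} on the edges and positive reals t_B > 0 for B ∈ 𝒮 such that P(v,w) = s(v,w) · Π_{B∈𝒮 : v∈B, w∉B} t_B · Π_{B∈𝒮 : w∈B, v∉B} t_B^{-1} for every arc (v→w) ∈ A; and in that case κ(v) = Π_{B∈𝒮 : v∈B} t_B^{-2} satisfies κ(v)P(v,w) = κ(w)P(w,v) for all v, w, so the invariant probability of P is proportional to κ. -/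

import Mathlib

open Finset

/-- The arcs of the directed graph `D = (V, A)` associated to a simple graph `G`. -/
abbrev Arc {V : Type*} (G : SimpleGraph V) : Type _ := {p : V × V // G.Adj p.1 p.2}

/-- The cocycle vector of a subset `B` of vertices: `+1` on arcs exiting `B`, `-1` on arcs
entering `B`, `0` elsewhere. -/
def cocycVec {V : Type*} [DecidableEq V] (G : SimpleGraph V) (B : Finset V)
    (a : Arc G) : ℝ :=
  if (a : V × V).1 ∈ B ∧ (a : V × V).2 ∉ B then 1
  else if (a : V × V).2 ∈ B ∧ (a : V × V).1 ∉ B then -1 else 0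

/-- parameterization of reversible Markov matrices: if the cocycle vectors of
the family `𝒮` span the cocycle space, then a Markov matrix supported exactly on the graph
satisfies detailed balance w.r.t. some positive function iff it admits the monomial
parameterization by a symmetric positive `s` and positive `t_B`, `B ∈ 𝒮`; in that case
`κ(v) = Π_{B∈𝒮 : v∈B} t_B^{-2}` satisfies detailed balance and is invariant for `P`. -/
lemma aux_db {V : Type*} [Fintype V] [DecidableEq V]
    (G : SimpleGraph V) [DecidableRel G.Adj]
    (𝒮 : Finset (Finset V))
    (P : V → V → ℝ) (hP0 : ∀ v w, 0 ≤ P v w)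
    (hsupp : ∀ v w, v ≠ w → (0 < P v w ↔ G.Adj v w))
    (s : V → V → ℝ) (t : Finset V → ℝ)
    (hsym : ∀ v w, s v w = s w v) (hs : ∀ v w, G.Adj v w → 0 < s v w)
    (ht : ∀ B ∈ 𝒮, 0 < t B)
    (hpar : ∀ v w, G.Adj v w → P v w =
        s v w * (∏ B ∈ 𝒮.filter (fun B => v ∈ B ∧ w ∉ B), t B)
          * (∏ B ∈ 𝒮.filter (fun B => w ∈ B ∧ v ∉ B), t B)⁻¹) :
    ∀ v w, (∏ B ∈ 𝒮.filter (fun B => v ∈ B), (t B) ^ (-2 : ℤ)) * P v w =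
        (∏ B ∈ 𝒮.filter (fun B => w ∈ B), (t B) ^ (-2 : ℤ)) * P w v := by
  intro v w
  by_cases hvw : v = w
  · subst hvw; ring
  by_cases hadj : G.Adj v w
  · -- split products
    have key : ∀ x y : V, 𝒮.filter (fun B => x ∈ B) =
        (𝒮.filter (fun B => x ∈ B ∧ y ∈ B)) ∪ (𝒮.filter (fun B => x ∈ B ∧ y ∉ B)) := by
      intro x y
      rw [← Finset.filter_or]
      apply Finset.filter_congr
      intro B _
      by_cases h : y ∈ B <;> simp [h]
    have hdisj : ∀ x y : V, Disjoint (𝒮.filter (fun B => x ∈ B ∧ y ∈ B))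
        (𝒮.filter (fun B => x ∈ B ∧ y ∉ B)) := by
      intro x y
      simp [Finset.disjoint_filter]
      tauto
    have hv : (∏ B ∈ 𝒮.filter (fun B => v ∈ B), (t B) ^ (-2 : ℤ)) =
        (∏ B ∈ 𝒮.filter (fun B => v ∈ B ∧ w ∈ B), (t B) ^ (-2 : ℤ)) *
        (∏ B ∈ 𝒮.filter (fun B => v ∈ B ∧ w ∉ B), (t B) ^ (-2 : ℤ)) := by
      rw [key v w, Finset.prod_union (hdisj v w)]
    have hw : (∏ B ∈ 𝒮.filter (fun B => w ∈ B), (t B) ^ (-2 : ℤ)) =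
        (∏ B ∈ 𝒮.filter (fun B => v ∈ B ∧ w ∈ B), (t B) ^ (-2 : ℤ)) *
        (∏ B ∈ 𝒮.filter (fun B => w ∈ B ∧ v ∉ B), (t B) ^ (-2 : ℤ)) := by
      rw [key w v, Finset.prod_union (hdisj w v)]
      congr 1
      apply Finset.prod_congr _ (fun _ _ => rfl)
      apply Finset.filter_congr; intro B _; tauto
    set a := ∏ B ∈ 𝒮.filter (fun B => v ∈ B ∧ w ∉ B), t B with ha
    set c := ∏ B ∈ 𝒮.filter (fun B => w ∈ B ∧ v ∉ B), t B with hc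
    set d := ∏ B ∈ 𝒮.filter (fun B => v ∈ B ∧ w ∈ B), t B with hd
    have hpos : ∀ (pred : Finset V → Prop) [DecidablePred pred],
        0 < ∏ B ∈ 𝒮.filter pred, t B := by
      intro pred _
      exact Finset.prod_pos fun B hB => ht B (Finset.mem_filter.mp hB).1
    have hap : 0 < a := hpos _
    have hcp : 0 < c := hpos _
    have hdp : 0 < d := hpos _
    have hz : ∀ (pred : Finset V → Prop) [DecidablePred pred],
        (∏ B ∈ 𝒮.filter pred, (t B) ^ (-2 : ℤ)) = ((∏ B ∈ 𝒮.filter pred, t B) ^ 2)⁻¹ := by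
      intro pred _
      rw [← Finset.prod_pow, ← Finset.prod_inv_distrib]
      exact Finset.prod_congr rfl fun B hB => by
        rw [zpow_neg, ← zpow_natCast (t B) 2]; norm_num
    rw [hv, hw, hz, hz, hz, hpar v w hadj, hpar w v hadj.symm, hsym w v]
    field_simp
  · have h1 : P v w = 0 := by
      by_contra h
      exact hadj ((hsupp v w hvw).mp (lt_of_le_of_ne (hP0 v w) (Ne.symm h)))
    have h2 : P w v = 0 := by
      by_contra h
      exact hadj (((hsupp w v (Ne.symm hvw)).mp (lt_of_le_of_ne (hP0 w v) (Ne.symm h))).symm)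
    rw [h1, h2, mul_zero, mul_zero]

lemma grad_mem {V : Type*} [Fintype V] [DecidableEq V]
    (G : SimpleGraph V) [DecidableRel G.Adj] (g : V → ℝ) :
    (fun a : {p : V × V // G.Adj p.1 p.2} => g (a : V × V).1 - g (a : V × V).2) ∈
      Submodule.span ℝ (cocycVec G '' {B : Finset V | B.Nonempty ∧ B ≠ Finset.univ}) := by
  by_cases hV : Nontrivial V
  · have hrep : (fun a : {p : V × V // G.Adj p.1 p.2} =>
        g (a : V × V).1 - g (a : V × V).2) = ∑ v : V, g v • cocycVec G {v} := by
      funext a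
      have hne : (a : V × V).1 ≠ (a : V × V).2 := G.ne_of_adj a.2
      have hpt : ∀ v : V, cocycVec G {v} a =
          (if (a : V × V).1 = v then (1:ℝ) else 0) - (if (a : V × V).2 = v then (1:ℝ) else 0) := by
        intro v
        by_cases hx : (a : V × V).1 = v <;> by_cases hy : (a : V × V).2 = v <;>
          simp [cocycVec, hx, hy, hne] <;> simp_all
      simp only [Finset.sum_apply, Pi.smul_apply, smul_eq_mul, hpt, mul_sub,
        Finset.sum_sub_distrib, mul_ite, mul_one, mul_zero]
      simp [eq_comm]
    rw [hrep]
    apply Submodule.sum_mem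
    intro v _
    apply Submodule.smul_mem
    apply Submodule.subset_span
    refine ⟨{v}, ⟨Finset.singleton_nonempty v, ?_⟩, rfl⟩
    intro h
    obtain ⟨w, hw⟩ := exists_ne v
    have : w ∈ ({v} : Finset V) := h ▸ Finset.mem_univ w
    exact hw (Finset.mem_singleton.mp this)
  · have : (fun a : {p : V × V // G.Adj p.1 p.2} =>
        g (a : V × V).1 - g (a : V × V).2) = 0 := by
      have : Subsingleton V := not_nontrivial_iff_subsingleton.mp hV
      funext a
      exact absurd (Subsingleton.elim (a : V × V).1 (a : V × V).2) (G.ne_of_adj a.2)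
    · rw [this]; exact Submodule.zero_mem _

lemma fwd {V : Type*} [Fintype V] [DecidableEq V]
    (G : SimpleGraph V) [DecidableRel G.Adj]
    (𝒮 : Finset (Finset V))
    (P : V → V → ℝ) (hP0 : ∀ v w, 0 ≤ P v w)
    (hsupp : ∀ v w, v ≠ w → (0 < P v w ↔ G.Adj v w))
    (l : Finset V →₀ ℝ) (hls : ↑l.support ⊆ (𝒮 : Set (Finset V)))
    (κ : V → ℝ) (hκ : ∀ v, 0 < κ v) (hdb : ∀ v w, κ v * P v w = κ w * P w v)
    (hl : Finsupp.linearCombination ℝ (cocycVec G) l =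
      fun a : {p : V × V // G.Adj p.1 p.2} =>
        (-(Real.log (κ (a : V × V).1)) / 2) - (-(Real.log (κ (a : V × V).2)) / 2)) :
    ∀ v w, G.Adj v w → P v w =
        Real.sqrt (P v w * P w v) *
          (∏ B ∈ 𝒮.filter (fun B => v ∈ B ∧ w ∉ B), Real.exp (l B))
          * (∏ B ∈ 𝒮.filter (fun B => w ∈ B ∧ v ∉ B), Real.exp (l B))⁻¹ := by
  intro v w hadj
  set a : {p : V × V // G.Adj p.1 p.2} := ⟨(v, w), hadj⟩ with ha
  -- the sum over 𝒮 equals f a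
  have hsum : ∑ B ∈ 𝒮, l B * cocycVec G B a =
      (-(Real.log (κ v)) / 2) - (-(Real.log (κ w)) / 2) := by
    have h1 : ∑ B ∈ 𝒮, l B * cocycVec G B a =
        ∑ B ∈ l.support, l B * cocycVec G B a := by
      apply (Finset.sum_subset (fun B hB => hls hB) ?_).symm
      intro B _ hB
      rw [Finsupp.notMem_support_iff.mp hB, zero_mul]
    rw [h1]
    have := congrFun hl a
    rw [Finsupp.linearCombination_apply, Finsupp.sum] at this
    simpa using this
  -- the product identity
  have hprod : Real.exp (∑ B ∈ 𝒮, l B * cocycVec G B a) =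
      (∏ B ∈ 𝒮.filter (fun B => v ∈ B ∧ w ∉ B), Real.exp (l B))
      * (∏ B ∈ 𝒮.filter (fun B => w ∈ B ∧ v ∉ B), Real.exp (l B))⁻¹ := by
    have e1 : ∏ B ∈ 𝒮.filter (fun B => v ∈ B ∧ w ∉ B), Real.exp (l B * cocycVec G B a) =
        ∏ B ∈ 𝒮.filter (fun B => v ∈ B ∧ w ∉ B), Real.exp (l B) := by
      apply Finset.prod_congr rfl
      intro B hB
      have := (Finset.mem_filter.mp hB).2
      simp [cocycVec, ha, this.1, this.2]
    have e2 : ∏ B ∈ 𝒮.filter (fun B => ¬(v ∈ B ∧ w ∉ B) ∧ (w ∈ B ∧ v ∉ B)),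
        Real.exp (l B * cocycVec G B a) =
        (∏ B ∈ 𝒮.filter (fun B => w ∈ B ∧ v ∉ B), Real.exp (l B))⁻¹ := by
      rw [show (𝒮.filter (fun B => ¬(v ∈ B ∧ w ∉ B) ∧ (w ∈ B ∧ v ∉ B))) =
          𝒮.filter (fun B => w ∈ B ∧ v ∉ B) from Finset.filter_congr fun B _ => by tauto]
      rw [← Finset.prod_inv_distrib]
      apply Finset.prod_congr rfl
      intro B hB
      have h := (Finset.mem_filter.mp hB).2
      have : cocycVec G B a = -1 := by simp [cocycVec, ha, h.1, h.2]
      rw [this, mul_neg_one, Real.exp_neg]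
    have e3 : ∏ B ∈ 𝒮.filter (fun B => ¬(v ∈ B ∧ w ∉ B) ∧ ¬(w ∈ B ∧ v ∉ B)),
        Real.exp (l B * cocycVec G B a) = 1 := by
      apply Finset.prod_eq_one
      intro B hB
      have h := (Finset.mem_filter.mp hB).2
      have : cocycVec G B a = 0 := by
        simp only [cocycVec, ha]
        rw [if_neg h.1, if_neg h.2]
      rw [this, mul_zero, Real.exp_zero]
    rw [Real.exp_sum,
      ← Finset.prod_filter_mul_prod_filter_not 𝒮 (fun B => v ∈ B ∧ w ∉ B),
      ← Finset.prod_filter_mul_prod_filter_not (𝒮.filter (fun B => ¬(v ∈ B ∧ w ∉ B)))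
        (fun B => w ∈ B ∧ v ∉ B),
      Finset.filter_filter, Finset.filter_filter, e1, e2, e3, mul_one]
  rw [mul_assoc, ← hprod, hsum]
  -- final numeric identity
  have hvw : v ≠ w := G.ne_of_adj hadj
  have hPvw : 0 < P v w := (hsupp v w hvw).mpr hadj
  have hPwv : 0 < P w v := (hsupp w v hvw.symm).mpr hadj.symm
  set X := Real.exp (-Real.log (κ v) / 2 - -Real.log (κ w) / 2) with hX
  have hXpos : 0 < X := Real.exp_pos _
  have hX2 : X ^ 2 = κ w / κ v := by
    rw [hX, ← Real.exp_nat_mul]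
    have : (2:ℝ) * (-Real.log (κ v) / 2 - -Real.log (κ w) / 2) =
        Real.log (κ w) - Real.log (κ v) := by push_cast; ring
    rw [show ((2:ℕ):ℝ) = (2:ℝ) by norm_num, this, Real.exp_sub, Real.exp_log (hκ w),
      Real.exp_log (hκ v)]
  have hS : Real.sqrt (P v w * P w v) ^ 2 = P v w * P w v :=
    Real.sq_sqrt (le_of_lt (mul_pos hPvw hPwv))
  have hSpos : 0 < Real.sqrt (P v w * P w v) := Real.sqrt_pos.mpr (mul_pos hPvw hPwv)
  have hsq : (Real.sqrt (P v w * P w v) * X) ^ 2 = P v w ^ 2 := by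
    rw [mul_pow, hS, hX2]
    have h := hdb v w
    field_simp [(hκ v).ne']
    linear_combination -h
  nlinarith [mul_pos hSpos hXpos, hPvw, hsq]

theorem stmt_18 {V : Type*} [Fintype V] [DecidableEq V]
    (G : SimpleGraph V) [DecidableRel G.Adj] (hG : G.Connected)
    (𝒮 : Finset (Finset V))
    (h𝒮 : ∀ B ∈ 𝒮, B.Nonempty ∧ B ≠ Finset.univ)
    (hspan : Submodule.span ℝ (cocycVec G '' (𝒮 : Set (Finset V))) =
      Submodule.span ℝ (cocycVec G '' {B : Finset V | B.Nonempty ∧ B ≠ Finset.univ}))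
    (P : V → V → ℝ) (hP0 : ∀ v w, 0 ≤ P v w) (hP1 : ∀ v, (∑ w, P v w) = 1)
    (hsupp : ∀ v w, v ≠ w → (0 < P v w ↔ G.Adj v w)) :
    ((∃ κ : V → ℝ, (∀ v, 0 < κ v) ∧ ∀ v w, κ v * P v w = κ w * P w v) ↔
      (∃ (s : V → V → ℝ) (t : Finset V → ℝ),
        (∀ v w, s v w = s w v) ∧ (∀ v w, G.Adj v w → 0 < s v w) ∧
        (∀ B ∈ 𝒮, 0 < t B) ∧
        (∀ v w, G.Adj v w → P v w =
          s v w * (∏ B ∈ 𝒮.filter (fun B => v ∈ B ∧ w ∉ B), t B)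
            * (∏ B ∈ 𝒮.filter (fun B => w ∈ B ∧ v ∉ B), t B)⁻¹))) ∧
    (∀ (s : V → V → ℝ) (t : Finset V → ℝ),
      (∀ v w, s v w = s w v) → (∀ v w, G.Adj v w → 0 < s v w) →
      (∀ B ∈ 𝒮, 0 < t B) →
      (∀ v w, G.Adj v w → P v w =
        s v w * (∏ B ∈ 𝒮.filter (fun B => v ∈ B ∧ w ∉ B), t B)
          * (∏ B ∈ 𝒮.filter (fun B => w ∈ B ∧ v ∉ B), t B)⁻¹) →
      (∀ v w, (∏ B ∈ 𝒮.filter (fun B => v ∈ B), (t B) ^ (-2 : ℤ)) * P v w =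
        (∏ B ∈ 𝒮.filter (fun B => w ∈ B), (t B) ^ (-2 : ℤ)) * P w v) ∧
      (∀ w, (∑ v, (∏ B ∈ 𝒮.filter (fun B => v ∈ B), (t B) ^ (-2 : ℤ)) * P v w) =
        ∏ B ∈ 𝒮.filter (fun B => w ∈ B), (t B) ^ (-2 : ℤ))) := by
  constructor
  · constructor
    · rintro ⟨κ, hκ, hdb⟩
      -- gradient membership
      have hmem := grad_mem G (fun v => -(Real.log (κ v)) / 2)
      rw [← hspan] at hmem
      rw [Finsupp.mem_span_image_iff_linearCombination] at hmem
      obtain ⟨l, hls, hl⟩ := hmem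
      rw [Finsupp.mem_supported] at hls
      refine ⟨fun v w => Real.sqrt (P v w * P w v), fun B => Real.exp (l B),
        fun v w => by simp only []; rw [mul_comm], ?_, fun B _ => Real.exp_pos _, ?_⟩
      · intro v w hadj
        have hvw : v ≠ w := G.ne_of_adj hadj
        exact Real.sqrt_pos.mpr (mul_pos ((hsupp v w hvw).mpr hadj)
          ((hsupp w v hvw.symm).mpr hadj.symm))
      · exact fwd G 𝒮 P hP0 hsupp l hls κ hκ hdb hl
    · rintro ⟨s, t, hsym, hs, ht, hpar⟩
      refine ⟨fun v => ∏ B ∈ 𝒮.filter (fun B => v ∈ B), (t B) ^ (-2 : ℤ), ?_, ?_⟩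
      · intro v
        exact Finset.prod_pos fun B hB =>
          zpow_pos (ht B (Finset.mem_filter.mp hB).1) _
      · exact aux_db G 𝒮 P hP0 hsupp s t hsym hs ht hpar
  · intro s t hsym hs ht hpar
    have hdb := aux_db G 𝒮 P hP0 hsupp s t hsym hs ht hpar
    refine ⟨hdb, ?_⟩
    intro w
    calc ∑ v, (∏ B ∈ 𝒮.filter (fun B => v ∈ B), (t B) ^ (-2 : ℤ)) * P v w
        = ∑ v, (∏ B ∈ 𝒮.filter (fun B => w ∈ B), (t B) ^ (-2 : ℤ)) * P w v :=
          Finset.sum_congr rfl fun v _ => hdb v w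
      _ = (∏ B ∈ 𝒮.filter (fun B => w ∈ B), (t B) ^ (-2 : ℤ)) * ∑ v, P w v := by
          rw [Finset.mul_sum]
      _ = _ := by rw [hP1 w, mul_one]
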